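/- arXiv:2205.08665 — 2 statements merged into one kernel-verified Lean document; each statement's English description precedes it below -/
import Mathlib

section
/- Let w be an edge configuration on a finite simple graph G. Then the sum of the unnormalized joint vertex–edge weights over all spin configurations equals the unnormalized edge weight: Σ_{s : V→{−1,+1}} W_VE(s,w) = W_E(w). -/
open Classical

noncomputable section

variable {V : Type*} [Fintype V] [DecidableEq V]

/-- Product `s i * s j` of spins over an unordered edge `{i, j}`. -/
def pairProd (s : V → ℝ) : Sym2 V → ℝ :=
  Sym2.lift ⟨fun i j => s i * s j, fun _ _ => mul_comm _ _⟩

/-- Unnormalized Gibbs weight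
`W_V(s) = exp (β Σ_{{i,j} ∈ E} s_i s_j + β Σ_i h_i s_i)`. -/
def WV (G : SimpleGraph V) [DecidableRel G.Adj] (β : ℝ) (h : V → ℝ) (s : V → ℝ) : ℝ :=
  Real.exp (β * ∑ e ∈ G.edgeFinset, pairProd s e + β * ∑ i : V, h i * s i)

/-- Edge factor of the joint vertex-edge weight:
`(1 - e^{-2β})` if `w_{ij} = 1` and `s_i = s_j`, `e^{-2β}` if `w_{ij} = 0`, else `0`. -/
def edgeFactorVE (β : ℝ) (s : V → ℝ) (b : Bool) : Sym2 V → ℝ :=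
  Sym2.lift ⟨fun i j =>
    if b then (if s i = s j then 1 - Real.exp (-2 * β) else 0) else Real.exp (-2 * β),
    by intro i j; by_cases hb : b <;> simp [hb, eq_comm]⟩

/-- Unnormalized joint vertex-edge weight `W_VE(s, w)`. -/
def WVE (G : SimpleGraph V) [DecidableRel G.Adj] (β : ℝ) (h : V → ℝ) (s : V → ℝ)
    (w : G.edgeSet → Bool) : ℝ :=
  (∏ e : G.edgeSet, edgeFactorVE β s (w e) e.val) * Real.exp (β * ∑ i : V, h i * s i)

/-- Edge factor of the Swendsen-Wang edge-step probability: if `s_i = s_j` then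
`(1 - e^{-2β})` for `w_{ij} = 1` and `e^{-2β}` for `w_{ij} = 0`; otherwise `0` for
`w_{ij} = 1` and `1` for `w_{ij} = 0`. -/
def edgeFactorP (β : ℝ) (s : V → ℝ) (b : Bool) : Sym2 V → ℝ :=
  Sym2.lift ⟨fun i j =>
    if s i = s j then (if b then 1 - Real.exp (-2 * β) else Real.exp (-2 * β))
    else (if b then 0 else 1),
    by intro i j; simp [eq_comm]⟩

/-- Swendsen-Wang edge-step probability `P(s, w)`. -/
def swP (G : SimpleGraph V) [DecidableRel G.Adj] (β : ℝ) (s : V → ℝ)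
    (w : G.edgeSet → Bool) : ℝ :=
  ∏ e : G.edgeSet, edgeFactorP β s (w e) e.val

/-- Spanning subgraph of `G` whose edges are the edges `e` with `w e = 1`. -/
def openSubgraph (G : SimpleGraph V) [DecidableRel G.Adj] (w : G.edgeSet → Bool) :
    SimpleGraph V where
  Adj i j := ∃ hij : G.Adj i j, w ⟨s(i, j), G.mem_edgeSet.mpr hij⟩ = true
  symm := ⟨by
    rintro i j ⟨hij, hw⟩
    refine ⟨hij.symm, ?_⟩
    have he : (⟨s(j, i), G.mem_edgeSet.mpr hij.symm⟩ : G.edgeSet)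
        = ⟨s(i, j), G.mem_edgeSet.mpr hij⟩ := Subtype.ext (Sym2.eq_swap)
    rw [he]; exact hw⟩
  loopless := ⟨by rintro i ⟨hij, -⟩; exact hij.ne rfl⟩

/-- `h_γ = Σ_{i ∈ γ} h_i`: sum of the field over a connected component `γ ∈ C_w`. -/
def hComp (G : SimpleGraph V) [DecidableRel G.Adj] (h : V → ℝ) (w : G.edgeSet → Bool)
    (γ : (openSubgraph G w).ConnectedComponent) : ℝ :=
  ∑ i ∈ Finset.univ.filter (fun i => (openSubgraph G w).connectedComponentMk i = γ), h i

/-- A configuration is compatible with the edge configuration `w` if it is constant on each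
connected component of the subgraph of open edges. -/
def Compatible (G : SimpleGraph V) [DecidableRel G.Adj] (w : G.edgeSet → Bool)
    (t : V → ℝ) : Prop :=
  ∀ i j : V, (openSubgraph G w).connectedComponentMk i = (openSubgraph G w).connectedComponentMk j
    → t i = t j

/-- Swendsen-Wang spin-step probability `Q(w, t)`: for `t` compatible with `w`, the product
over components `γ ∈ C_w` of `e^{β h_γ τ_γ} / (e^{β h_γ} + e^{-β h_γ})`, where
`τ_γ = t γ.out` is the common value of `t` on `γ`; and `0` for incompatible `t`. -/
def swQ (G : SimpleGraph V) [DecidableRel G.Adj] (β : ℝ) (h : V → ℝ) (w : G.edgeSet → Bool)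
    (t : V → ℝ) : ℝ :=
  if Compatible G w t then
    ∏ γ : (openSubgraph G w).ConnectedComponent,
      Real.exp (β * hComp G h w γ * t γ.out) /
        (Real.exp (β * hComp G h w γ) + Real.exp (-(β * hComp G h w γ)))
  else 0

/-- Unnormalized edge weight
`W_E(w) = Π_{w_e = 1} (1 - e^{-2β}) · Π_{w_e = 0} e^{-2β} · Π_{γ ∈ C_w} (e^{β h_γ} + e^{-β h_γ})`. -/
def WE (G : SimpleGraph V) [DecidableRel G.Adj] (β : ℝ) (h : V → ℝ)
    (w : G.edgeSet → Bool) : ℝ :=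
  (∏ _e ∈ Finset.univ.filter (fun e : G.edgeSet => w e = true), (1 - Real.exp (-2 * β))) *
  (∏ _e ∈ Finset.univ.filter (fun e : G.edgeSet => w e = false), Real.exp (-2 * β)) *
  ∏ γ : (openSubgraph G w).ConnectedComponent,
    (Real.exp (β * hComp G h w γ) + Real.exp (-(β * hComp G h w γ)))



/-- Closed edges always contribute `e^{-2β}`. -/
lemma edgeFactorVE_false (β : ℝ) (s : V → ℝ) (z : Sym2 V) :
    edgeFactorVE β s false z = Real.exp (-2 * β) := by
  induction z using Sym2.ind with
  | _ i j => simp [edgeFactorVE]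

lemma edgeFactorVE_true_of (β : ℝ) (s : V → ℝ) (z : Sym2 V)
    (hz : ∀ i j, z = s(i, j) → s i = s j) :
    edgeFactorVE β s true z = 1 - Real.exp (-2 * β) := by
  revert hz
  induction z using Sym2.ind with
  | _ i j =>
    intro hz
    simp [edgeFactorVE, hz i j rfl]

lemma compatible_of_adj_eq (G : SimpleGraph V) [DecidableRel G.Adj] (w : G.edgeSet → Bool)
    (s : V → ℝ) (hs : ∀ i j, (openSubgraph G w).Adj i j → s i = s j) :
    Compatible G w s := by
  intro i j hij
  have hr : (openSubgraph G w).Reachable i j := SimpleGraph.ConnectedComponent.exact hij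
  obtain ⟨p⟩ := hr
  clear hij
  induction p with
  | nil => rfl
  | cons ha _ ih => exact (hs _ _ ha).trans ih

lemma WVE_eq_zero_of_not_compatible (G : SimpleGraph V) [DecidableRel G.Adj]
    (β : ℝ) (h : V → ℝ) (s : V → ℝ) (w : G.edgeSet → Bool)
    (hs : ¬ Compatible G w s) : WVE G β h s w = 0 := by
  have hex : ∃ i j, (openSubgraph G w).Adj i j ∧ s i ≠ s j := by
    by_contra hc
    push_neg at hc
    exact hs (compatible_of_adj_eq G w s fun i j ha => hc i j ha)
  obtain ⟨i, j, ⟨hG, hw⟩, hne⟩ := hex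
  unfold WVE
  apply mul_eq_zero_of_left
  apply Finset.prod_eq_zero (Finset.mem_univ (⟨s(i, j), G.mem_edgeSet.mpr hG⟩ : G.edgeSet))
  rw [hw]
  simp [edgeFactorVE, hne]

lemma prod_edgeFactorVE_of_adj_eq (G : SimpleGraph V) [DecidableRel G.Adj]
    (β : ℝ) (s : V → ℝ) (w : G.edgeSet → Bool)
    (hs : ∀ i j, (openSubgraph G w).Adj i j → s i = s j) :
    ∏ e : G.edgeSet, edgeFactorVE β s (w e) e.val =
    (∏ _e ∈ Finset.univ.filter (fun e : G.edgeSet => w e = true), (1 - Real.exp (-2 * β))) *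
    (∏ _e ∈ Finset.univ.filter (fun e : G.edgeSet => w e = false), Real.exp (-2 * β)) := by
  rw [← Finset.prod_filter_mul_prod_filter_not Finset.univ (fun e : G.edgeSet => w e = true)]
  have hfil : (Finset.univ.filter (fun e : G.edgeSet => ¬ w e = true)) =
      Finset.univ.filter (fun e : G.edgeSet => w e = false) := by
    ext e; simp
  rw [hfil]
  congr 1
  · apply Finset.prod_congr rfl
    intro e he
    have hw : w e = true := (Finset.mem_filter.mp he).2
    rw [hw]
    apply edgeFactorVE_true_of
    intro i j hij
    have hGadj : G.Adj i j := G.mem_edgeSet.mp (hij ▸ e.prop)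
    have he' : e = (⟨s(i, j), G.mem_edgeSet.mpr hGadj⟩ : G.edgeSet) := Subtype.ext hij
    exact hs i j ⟨hGadj, by rw [← he']; exact hw⟩
  · apply Finset.prod_congr rfl
    intro e he
    have hw : w e = false := (Finset.mem_filter.mp he).2
    rw [hw, edgeFactorVE_false]

/-- For any edge configuration `w`, summing the unnormalized joint vertex-edge
weights over all spin configurations gives the unnormalized edge weight:
`Σ_{s : V → {-1,+1}} W_VE(s, w) = W_E(w)`. -/
theorem sum_WVE_over_spinConfigs (G : SimpleGraph V) [DecidableRel G.Adj]
    (β : ℝ) (hβ : 0 < β) (h : V → ℝ) (w : G.edgeSet → Bool) :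
    ∑ s : V → ({-1, 1} : Finset ℝ), WVE G β h (fun i => (s i : ℝ)) w = WE G β h w := by
  classical
  set S : Finset ℝ := ({-1, 1} : Finset ℝ) with hS
  set O := openSubgraph G w with hOdef
  set Φ : (O.ConnectedComponent → S) → (V → S) :=
    fun σ i => σ (O.connectedComponentMk i) with hΦ
  have hmkout : ∀ γ : O.ConnectedComponent, O.connectedComponentMk γ.out = γ :=
    fun γ => Quot.out_eq γ
  have hΦinj : Function.Injective Φ := by
    intro σ τ hστ
    funext γ
    have := congrFun hστ γ.out
    simpa [Φ, hmkout γ] using this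
  have hΦadj : ∀ (σ : O.ConnectedComponent → S) (i j : V), O.Adj i j →
      ((Φ σ i : ℝ) = (Φ σ j : ℝ)) := by
    intro σ i j hij
    have : O.connectedComponentMk i = O.connectedComponentMk j :=
      SimpleGraph.ConnectedComponent.connectedComponentMk_eq_of_adj hij
    simp [Φ, this]
  have himg : ∀ s : V → S, Compatible G w (fun i => (s i : ℝ)) → s ∈ Finset.univ.image Φ := by
    intro s hs
    refine Finset.mem_image.mpr ⟨fun γ => s γ.out, Finset.mem_univ _, ?_⟩
    funext i
    apply Subtype.ext
    exact hs (O.connectedComponentMk i).out i (by rw [hmkout])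
  have hstep1 : ∑ s : V → S, WVE G β h (fun i => (s i : ℝ)) w =
      ∑ σ : O.ConnectedComponent → S, WVE G β h (fun i => (Φ σ i : ℝ)) w := by
    have h1 : ∑ s ∈ Finset.univ.image Φ, WVE G β h (fun i => (s i : ℝ)) w =
        ∑ σ : O.ConnectedComponent → S, WVE G β h (fun i => ((Φ σ) i : ℝ)) w :=
      Finset.sum_image (fun a _ b _ hab => hΦinj hab)
    rw [← h1]
    apply (Finset.sum_subset (Finset.subset_univ _) ?_).symm
    intro s _ hs
    exact WVE_eq_zero_of_not_compatible G β h _ w (fun hc => hs (himg s hc))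
  rw [hstep1]
  have hkey : ∀ σ : O.ConnectedComponent → S,
      WVE G β h (fun i => (Φ σ i : ℝ)) w =
      ((∏ _e ∈ Finset.univ.filter (fun e : G.edgeSet => w e = true), (1 - Real.exp (-2 * β))) *
       (∏ _e ∈ Finset.univ.filter (fun e : G.edgeSet => w e = false), Real.exp (-2 * β))) *
      ∏ γ : O.ConnectedComponent, Real.exp (β * hComp G h w γ * (σ γ : ℝ)) := by
    intro σ
    unfold WVE
    rw [prod_edgeFactorVE_of_adj_eq G β _ w (hΦadj σ)]
    congr 1
    have hsum : ∑ i : V, h i * (Φ σ i : ℝ) =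
        ∑ γ : O.ConnectedComponent, hComp G h w γ * (σ γ : ℝ) := by
      rw [← Finset.sum_fiberwise Finset.univ (fun i => O.connectedComponentMk i)
        (fun i => h i * (Φ σ i : ℝ))]
      apply Finset.sum_congr rfl
      intro γ _
      rw [hComp, Finset.sum_mul]
      apply Finset.sum_congr rfl
      intro i hi
      have : O.connectedComponentMk i = γ := (Finset.mem_filter.mp hi).2
      simp [Φ, this]
    rw [hsum, Finset.mul_sum, Real.exp_sum]
    apply Finset.prod_congr rfl
    intro γ _
    ring_nf
  calc ∑ σ : O.ConnectedComponent → S, WVE G β h (fun i => (Φ σ i : ℝ)) w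
      = ((∏ _e ∈ Finset.univ.filter (fun e : G.edgeSet => w e = true), (1 - Real.exp (-2 * β))) *
         (∏ _e ∈ Finset.univ.filter (fun e : G.edgeSet => w e = false), Real.exp (-2 * β))) *
        ∑ σ : O.ConnectedComponent → S,
          ∏ γ : O.ConnectedComponent, Real.exp (β * hComp G h w γ * (σ γ : ℝ)) := by
        rw [Finset.mul_sum]
        exact Finset.sum_congr rfl fun σ _ => hkey σ
    _ = WE G β h w := by
        have hswap : ∑ σ : O.ConnectedComponent → S,
            ∏ γ : O.ConnectedComponent, Real.exp (β * hComp G h w γ * (σ γ : ℝ)) =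
            ∏ γ : O.ConnectedComponent,
              (Real.exp (β * hComp G h w γ) + Real.exp (-(β * hComp G h w γ))) := by
          rw [← Fintype.piFinset_univ,
            ← Finset.prod_univ_sum (fun _ : O.ConnectedComponent => (Finset.univ : Finset S))
              (fun γ (x : S) => Real.exp (β * hComp G h w γ * (x : ℝ)))]
          apply Finset.prod_congr rfl
          intro γ _
          rw [Finset.sum_coe_sort S (fun x : ℝ => Real.exp (β * hComp G h w γ * x)), hS,
            Finset.sum_pair (by norm_num : (-1 : ℝ) ≠ 1)]
          rw [mul_neg_one, mul_one, add_comm]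
        rw [hswap, WE]
  

end
end

section
/- For every edge configuration w and every spin configuration s on a finite simple graph G, the unnormalized joint vertex–edge weight factors as W_VE(s,w) = W_E(w) · Q(w,s). (Both sides vanish when s is not compatible with w.) -/
open Classical

noncomputable section

variable {V : Type*} [Fintype V] [DecidableEq V]

lemma compat_of_edges (G : SimpleGraph V) [DecidableRel G.Adj] (w : G.edgeSet → Bool)
    (s : V → ℝ)
    (hedge : ∀ (i j : V) (hij : G.Adj i j),
      w ⟨Sym2.mk i j, G.mem_edgeSet.mpr hij⟩ = true → s i = s j) :
    Compatible G w s := by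
  intro i j hcc
  have hr : (openSubgraph G w).Reachable i j :=
    (SimpleGraph.ConnectedComponent.eq).mp hcc
  obtain ⟨p⟩ := hr
  induction p with
  | nil => rfl
  | cons hadj p ih =>
    obtain ⟨hA, hw⟩ := hadj
    exact (hedge _ _ hA hw).trans
      (ih (SimpleGraph.ConnectedComponent.sound p.reachable))

/-- For every edge configuration `w` and spin configuration `s`, the joint
vertex-edge weight factors as `W_VE(s, w) = W_E(w) · Q(w, s)`. -/
theorem WVE_eq_WE_mul_swQ (G : SimpleGraph V) [DecidableRel G.Adj]
    (β : ℝ) (hβ : 0 < β) (h : V → ℝ)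
    (w : G.edgeSet → Bool) (s : V → ℝ) (hs : ∀ i, s i = 1 ∨ s i = -1) :
    WVE G β h s w = WE G β h w * swQ G β h w s := by
  by_cases hc : Compatible G w s
  · -- compatible case
    have hedgeVE : ∀ e : G.edgeSet, edgeFactorVE β s (w e) e.val =
        if w e = true then 1 - Real.exp (-2*β) else Real.exp (-2*β) := by
      rintro ⟨e, he⟩
      induction e using Sym2.ind with
      | _ i j =>
        have hA : G.Adj i j := he
        by_cases hb : w ⟨Sym2.mk i j, he⟩ = true
        · have hsij : s i = s j := by
            apply hc
            apply SimpleGraph.ConnectedComponent.sound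
            exact SimpleGraph.Adj.reachable ⟨hA, hb⟩
          simp [edgeFactorVE, hb, hsij]
        · simp only [Bool.not_eq_true] at hb
          simp [edgeFactorVE, hb]
    have hsum : ∑ i : V, h i * s i =
        ∑ γ : (openSubgraph G w).ConnectedComponent, hComp G h w γ * s γ.out := by
      rw [← Finset.sum_fiberwise Finset.univ
        (fun i => (openSubgraph G w).connectedComponentMk i) (fun i => h i * s i)]
      refine Finset.sum_congr rfl fun γ _ => ?_
      rw [hComp, Finset.sum_mul]
      refine Finset.sum_congr rfl fun i hi => ?_
      have hiγ : (openSubgraph G w).connectedComponentMk i = γ :=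
        (Finset.mem_filter.mp hi).2
      have : s i = s γ.out := hc i γ.out (by
        rw [hiγ]; exact (Quot.out_eq γ).symm)
      rw [this]
    have hexp : Real.exp (β * ∑ i : V, h i * s i) =
        ∏ γ : (openSubgraph G w).ConnectedComponent,
          Real.exp (β * hComp G h w γ * s γ.out) := by
      rw [hsum, Finset.mul_sum, Real.exp_sum]
      exact Finset.prod_congr rfl fun γ _ => by ring_nf
    have hDne : ∀ γ : (openSubgraph G w).ConnectedComponent,
        Real.exp (β * hComp G h w γ) + Real.exp (-(β * hComp G h w γ)) ≠ 0 := fun γ =>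
      ne_of_gt (by positivity)
    rw [WVE, WE, swQ, if_pos hc, hexp]
    rw [Finset.prod_congr rfl fun e _ => hedgeVE e, Finset.prod_ite]
    have hfilter : Finset.univ.filter (fun e : G.edgeSet => ¬ w e = true) =
        Finset.univ.filter (fun e : G.edgeSet => w e = false) := by
      apply Finset.filter_congr; intro e _; simp
    rw [hfilter]
    have hND : (∏ γ : (openSubgraph G w).ConnectedComponent,
          (Real.exp (β * hComp G h w γ) + Real.exp (-(β * hComp G h w γ)))) *
        (∏ γ : (openSubgraph G w).ConnectedComponent,
          Real.exp (β * hComp G h w γ * s γ.out) /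
            (Real.exp (β * hComp G h w γ) + Real.exp (-(β * hComp G h w γ)))) =
        ∏ γ : (openSubgraph G w).ConnectedComponent,
          Real.exp (β * hComp G h w γ * s γ.out) := by
      rw [← Finset.prod_mul_distrib]
      exact Finset.prod_congr rfl fun γ _ => by
        field_simp
    rw [mul_assoc, ← hND]
    ring
  · -- incompatible case
    rw [swQ, if_neg hc, mul_zero, WVE]
    have : ∃ (i j : V) (hij : G.Adj i j),
        w ⟨Sym2.mk i j, G.mem_edgeSet.mpr hij⟩ = true ∧ s i ≠ s j := by
      by_contra hcon
      push_neg at hcon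
      exact hc (compat_of_edges G w s fun i j hij hw => hcon i j hij hw)
    obtain ⟨i, j, hij, hw, hne⟩ := this
    have hzero : edgeFactorVE β s (w ⟨Sym2.mk i j, G.mem_edgeSet.mpr hij⟩)
        (Sym2.mk i j) = 0 := by
      rw [hw]; simp [edgeFactorVE, hne]
    rw [Finset.prod_eq_zero (Finset.mem_univ (⟨Sym2.mk i j, G.mem_edgeSet.mpr hij⟩ :
      G.edgeSet)) hzero, zero_mul]

end
end
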